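/- Multi-agent off-policy policy gradient theorem (Theorem 1): For every agent i and every parameter θ = (θ^1, …, θ^n), the gradient of the off-policy objective J_μ(θ) = Σ_{s∈S} d_μ(s) v_θ(s) with respect to the agent's local parameter θ^i satisfies ∇_{θ^i} J_μ(θ) = Σ_{s∈S} m(s) Σ_{a∈A} π_θ(a|s) q_θ(s,a) ∇_{θ^i} log π^i_{θ^i}(a^i|s), where m is the emphatic weighting vector defined by mᵀ = d_μᵀ (I − P_{θ,γ})⁻¹. -/

import Mathlib

open Matrix

set_option maxHeartbeats 1000000

lemma det_diffAt {E : Type*} [NormedAddCommGroup E] [NormedSpace ℝ E]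
    {S : Type*} [Fintype S] [DecidableEq S] {A : E → Matrix S S ℝ} {x : E}
    (h : ∀ s s', DifferentiableAt ℝ (fun y => A y s s') x) :
    DifferentiableAt ℝ (fun y => (A y).det) x := by
  simp only [Matrix.det_apply]
  apply DifferentiableAt.fun_sum
  intro σ _
  simp only [Units.smul_def, zsmul_eq_mul]
  have hp : DifferentiableAt ℝ (fun y => ∏ s, A y (σ s) s) x :=
    (HasFDerivAt.finset_prod (u := Finset.univ) (g := fun s y => A y (σ s) s)
      (g' := fun s => fderiv ℝ (fun y => A y (σ s) s) x)
      (fun s _ => (h (σ s) s).hasFDerivAt)).differentiableAt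
  exact hp.const_mul _

lemma inv_entry_diffAt {E : Type*} [NormedAddCommGroup E] [NormedSpace ℝ E]
    {S : Type*} [Fintype S] [DecidableEq S] {A : E → Matrix S S ℝ} {x : E}
    (h : ∀ s s', DifferentiableAt ℝ (fun y => A y s s') x)
    (hdet : (A x).det ≠ 0) (s s' : S) :
    DifferentiableAt ℝ (fun y => (A y)⁻¹ s s') x := by
  have hd : DifferentiableAt ℝ (fun y => (A y).det) x := det_diffAt h
  have hadj : DifferentiableAt ℝ (fun y => (A y).adjugate s s') x := by
    simp only [Matrix.adjugate_apply]
    apply det_diffAt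
    intro t t'
    simp only [Matrix.updateRow_apply]
    by_cases ht : t = s'
    · simp [ht]
    · simpa [ht] using h t t'
  have heq : (fun y => (A y)⁻¹ s s') = fun y => ((A y).det)⁻¹ * (A y).adjugate s s' := by
    funext y
    rw [Matrix.inv_def, Ring.inverse_eq_inv, Matrix.smul_apply, smul_eq_mul]
  rw [heq]
  exact (hd.inv hdet).mul hadj

/-- Multi-agent off-policy policy gradient theorem (Theorem 1):
`∇_{θ^i} J_μ(θ) = ∑_s m(s) ∑_a π_θ(a|s) q_θ(s,a) ∇_{θ^i} log π^i_{θ^i}(a^i|s)`,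
where `mᵀ = d_μᵀ (I − P_{θ,γ})⁻¹`. -/
theorem multi_agent_off_policy_policy_gradient
    {S : Type*} [Fintype S] [Nonempty S] [DecidableEq S]
    -- n agents, agent i has parameter dimension md i and finite action set Ai i
    (n : ℕ) (md : Fin n → ℕ) (Ai : Fin n → Type*)
    [∀ i, Fintype (Ai i)] [∀ i, Nonempty (Ai i)]
    -- transition kernel on joint actions
    (P : S → (∀ i, Ai i) → S → ℝ)
    (hP0 : ∀ s a s', 0 ≤ P s a s') (hP1 : ∀ s a, ∑ s', P s a s' = 1)
    -- reward and discount
    (rbar : S → (∀ i, Ai i) → ℝ)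
    (γ : ℝ) (hγ0 : 0 < γ) (hγ1 : γ < 1)
    -- local target policies: positive, normalized, continuously differentiable
    (πl : (i : Fin n) → EuclideanSpace ℝ (Fin (md i)) → S → Ai i → ℝ)
    (hπpos : ∀ i x s ai, 0 < πl i x s ai)
    (hπ1 : ∀ i x s, ∑ ai, πl i x s ai = 1)
    (hπC1 : ∀ i s ai, ContDiff ℝ 1 (fun x => πl i x s ai))
    -- joint policy π_θ(a|s) = ∏ i, π^i_{θ^i}(a^i|s)
    (π : (∀ i, EuclideanSpace ℝ (Fin (md i))) → S → (∀ i, Ai i) → ℝ)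
    (hπ : ∀ θ s a, π θ s a = ∏ i, πl i (θ i) s (a i))
    -- fixed distribution d_μ
    (dμ : S → ℝ) (hdμ0 : ∀ s, 0 ≤ dμ s) (hdμ1 : ∑ s, dμ s = 1)
    -- the matrix P_{θ,γ}
    (Pγ : (∀ i, EuclideanSpace ℝ (Fin (md i))) → Matrix S S ℝ)
    (hPγ : ∀ θ s s', Pγ θ s s' = γ * ∑ a, π θ s a * P s a s')
    -- the value function v_θ = (I − P_{θ,γ})⁻¹ r_{π_θ}
    (v : (∀ i, EuclideanSpace ℝ (Fin (md i))) → S → ℝ)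
    (hv : ∀ θ, v θ = (1 - Pγ θ)⁻¹ *ᵥ (fun s => ∑ a, π θ s a * rbar s a))
    -- the action-value function q_θ
    (q : (∀ i, EuclideanSpace ℝ (Fin (md i))) → S → (∀ i, Ai i) → ℝ)
    (hq : ∀ θ s a, q θ s a = rbar s a + γ * ∑ s', P s a s' * v θ s')
    -- the off-policy objective J_μ(θ) = ∑_s d_μ(s) v_θ(s)
    (J : (∀ i, EuclideanSpace ℝ (Fin (md i))) → ℝ)
    (hJ : ∀ θ, J θ = ∑ s, dμ s * v θ s)
    -- the emphatic weighting mᵀ = d_μᵀ (I − P_{θ,γ})⁻¹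
    (em : (∀ i, EuclideanSpace ℝ (Fin (md i))) → S → ℝ)
    (hem : ∀ θ s, em θ s = ∑ s', dμ s' * (1 - Pγ θ)⁻¹ s' s)
    -- any agent i and any parameter θ
    (i : Fin n) (θ : ∀ i, EuclideanSpace ℝ (Fin (md i))) :
    fderiv ℝ (fun x => J (Function.update θ i x)) (θ i)
      = ∑ s, ∑ a, (em θ s * (π θ s a * q θ s a)) •
          fderiv ℝ (fun x => Real.log (πl i x s (a i))) (θ i) := by
  classical
  have hupd : Function.update θ i (θ i) = θ := Function.update_eq_self i θ
  -- π positive and sums to 1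
  have hπpos' : ∀ t s a, 0 < π t s a := fun t s a => by
    rw [hπ]; exact Finset.prod_pos fun j _ => hπpos j _ s (a j)
  have hπsum : ∀ (t : ∀ j, EuclideanSpace ℝ (Fin (md j))) s, ∑ a, π t s a = 1 := by
    intro t s
    calc ∑ a, π t s a
        = ∑ a ∈ Fintype.piFinset (fun j => (Finset.univ : Finset (Ai j))),
            ∏ j, πl j (t j) s (a j) := by
          rw [Fintype.piFinset_univ]; exact Finset.sum_congr rfl fun a _ => hπ t s a
      _ = ∏ j, ∑ aj, πl j (t j) s aj := (Finset.prod_univ_sum _ _).symm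
      _ = 1 := by simp [hπ1]
  -- Pγ entries: nonneg, row sums γ
  have hPγ0 : ∀ t s s', 0 ≤ Pγ t s s' := fun t s s' => by
    rw [hPγ]
    exact mul_nonneg hγ0.le
      (Finset.sum_nonneg fun a _ => mul_nonneg (hπpos' t s a).le (hP0 s a s'))
  have hPγrow : ∀ t s, ∑ s', Pγ t s s' = γ := by
    intro t s
    simp only [hPγ]
    rw [← Finset.mul_sum, Finset.sum_comm]
    rw [Finset.sum_congr rfl (fun a _ => by rw [← Finset.mul_sum, hP1, mul_one] :
      ∀ a ∈ Finset.univ, ∑ s', π t s a * P s a s' = π t s a)]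
    rw [hπsum, mul_one]
  -- invertibility
  have hdet : ∀ t, (1 - Pγ t).det ≠ 0 := by
    intro t
    apply det_ne_zero_of_sum_row_lt_diag
    intro s
    have hss : Pγ t s s ≤ γ := by
      rw [← hPγrow t s]
      exact Finset.single_le_sum (fun s' _ => hPγ0 t s s') (Finset.mem_univ s)
    calc ∑ s' ∈ Finset.univ.erase s, ‖(1 - Pγ t) s s'‖
        = ∑ s' ∈ Finset.univ.erase s, Pγ t s s' := by
          refine Finset.sum_congr rfl fun s' hs' => ?_
          have hne : s ≠ s' := (Finset.ne_of_mem_erase hs').symm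
          rw [Matrix.sub_apply, Matrix.one_apply_ne hne, zero_sub, norm_neg,
            Real.norm_eq_abs, abs_of_nonneg (hPγ0 t s s')]
      _ = γ - Pγ t s s := by rw [Finset.sum_erase_eq_sub (Finset.mem_univ s), hPγrow]
      _ < 1 - Pγ t s s := by linarith
      _ ≤ ‖(1 - Pγ t) s s‖ := by
          rw [Matrix.sub_apply, Matrix.one_apply_eq, Real.norm_eq_abs]
          exact le_abs_self _
  -- Bellman identity
  have hid : ∀ t s, v t s = (∑ a, π t s a * rbar s a) + ∑ s', Pγ t s s' * v t s' := by
    intro t s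
    have h1 : (1 - Pγ t) *ᵥ v t = fun s => ∑ a, π t s a * rbar s a := by
      rw [hv, Matrix.mulVec_mulVec,
        Matrix.mul_nonsing_inv _ (isUnit_iff_ne_zero.mpr (hdet t)), Matrix.one_mulVec]
    have h2 := congrFun h1 s
    simp only [Matrix.mulVec, dotProduct] at h2
    have h3 : ∑ x, (1 - Pγ t) s x * v t x = v t s - ∑ x, Pγ t s x * v t x := by
      simp_rw [Matrix.sub_apply, sub_mul]
      rw [Finset.sum_sub_distrib]
      congr 1
      simp [Matrix.one_apply, ite_mul]
    rw [h3] at h2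
    linarith [h2]
  -- derivative of local policy
  set L : S → (∀ j, Ai j) → (EuclideanSpace ℝ (Fin (md i)) →L[ℝ] ℝ) :=
    fun s a => fderiv ℝ (fun x => πl i x s (a i)) (θ i) with hLdef
  have hL : ∀ s (a : ∀ j, Ai j), HasFDerivAt (fun x => πl i x s (a i)) (L s a) (θ i) :=
    fun s a => (((hπC1 i s (a i)).differentiable one_ne_zero) (θ i)).hasFDerivAt
  set c : S → (∀ j, Ai j) → ℝ :=
    fun s a => ∏ j ∈ Finset.univ.erase i, πl j (θ j) s (a j) with hcdef
  have hπsplit : ∀ x s a, π (Function.update θ i x) s a = c s a * πl i x s (a i) := by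
    intro x s a
    rw [hπ, ← Finset.mul_prod_erase Finset.univ _ (Finset.mem_univ i),
      Function.update_self, mul_comm]
    congr 1
    exact Finset.prod_congr rfl fun j hj => by
      rw [Function.update_of_ne (Finset.ne_of_mem_erase hj)]
  set X : S → (∀ j, Ai j) → (EuclideanSpace ℝ (Fin (md i)) →L[ℝ] ℝ) :=
    fun s a => c s a • L s a with hXdef
  have hDπ : ∀ s a, HasFDerivAt (fun x => π (Function.update θ i x) s a)
      (X s a) (θ i) := by
    intro s a
    have heq : (fun x => π (Function.update θ i x) s a)
        = fun x => c s a * πl i x s (a i) := funext fun x => hπsplit x s a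
    rw [heq]
    exact (hL s a).const_mul (c s a)
  -- differentiability of the value function
  have hA : ∀ s s', DifferentiableAt ℝ
      (fun y => (1 - Pγ (Function.update θ i y)) s s') (θ i) := by
    intro s s'
    have heq : (fun y => (1 - Pγ (Function.update θ i y)) s s')
        = fun y => (1 : Matrix S S ℝ) s s'
            - γ * ∑ a, π (Function.update θ i y) s a * P s a s' := by
      funext y; rw [Matrix.sub_apply, hPγ]
    rw [heq]
    exact (differentiableAt_const _).sub
      ((DifferentiableAt.fun_sum fun a _ => ((hDπ s a).differentiableAt).mul_const _).const_mul γ)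
  have hvdiff : ∀ s, DifferentiableAt ℝ (fun y => v (Function.update θ i y) s) (θ i) := by
    intro s
    have heq : (fun y => v (Function.update θ i y) s)
        = fun y => ∑ s', (1 - Pγ (Function.update θ i y))⁻¹ s s'
            * ∑ a, π (Function.update θ i y) s' a * rbar s' a := by
      funext y; rw [hv]; rfl
    rw [heq]
    exact DifferentiableAt.fun_sum fun s' _ =>
      (inv_entry_diffAt hA (hdet _) s s').mul
        (DifferentiableAt.fun_sum fun a _ => ((hDπ s' a).differentiableAt).mul_const _)
  set Dg : S → (EuclideanSpace ℝ (Fin (md i)) →L[ℝ] ℝ) :=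
    fun s => fderiv ℝ (fun y => v (Function.update θ i y) s) (θ i) with hDgdef
  have hDg : ∀ s, HasFDerivAt (fun y => v (Function.update θ i y) s) (Dg s) (θ i) :=
    fun s => (hvdiff s).hasFDerivAt
  -- derivative of Pγ entries
  have hDPγ : ∀ s s', HasFDerivAt (fun x => Pγ (Function.update θ i x) s s')
      (γ • ∑ a, P s a s' • X s a) (θ i) := by
    intro s s'
    have heq : (fun x => Pγ (Function.update θ i x) s s')
        = fun x => γ * ∑ a, π (Function.update θ i x) s a * P s a s' :=
      funext fun x => hPγ _ s s'
    rw [heq]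
    exact (HasFDerivAt.fun_sum fun a _ => (hDπ s a).mul_const (P s a s')).const_mul γ
  -- the key linear equation for Dg
  set W : S → (EuclideanSpace ℝ (Fin (md i)) →L[ℝ] ℝ) :=
    fun s => ∑ a, q θ s a • X s a with hWdef
  have key : ∀ s, Dg s = W s + ∑ s', Pγ θ s s' • Dg s' := by
    intro s
    have hR : HasFDerivAt (fun x => (∑ a, π (Function.update θ i x) s a * rbar s a)
          + ∑ s', Pγ (Function.update θ i x) s s' * v (Function.update θ i x) s')
        ((∑ a, rbar s a • X s a)
          + ∑ s', (Pγ θ s s' • Dg s' + v θ s' • (γ • ∑ a, P s a s' • X s a)))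
        (θ i) := by
      refine HasFDerivAt.add (HasFDerivAt.fun_sum fun a _ => (hDπ s a).mul_const (rbar s a)) ?_
      refine HasFDerivAt.fun_sum fun s' _ => ?_
      have := (hDPγ s s').mul (hDg s')
      rwa [hupd] at this
    have hfun : (fun x => v (Function.update θ i x) s)
        = fun x => (∑ a, π (Function.update θ i x) s a * rbar s a)
          + ∑ s', Pγ (Function.update θ i x) s s' * v (Function.update θ i x) s' :=
      funext fun x => hid _ s
    have hL' : HasFDerivAt (fun x => v (Function.update θ i x) s)
        ((∑ a, rbar s a • X s a)
          + ∑ s', (Pγ θ s s' • Dg s' + v θ s' • (γ • ∑ a, P s a s' • X s a)))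
        (θ i) := by rw [hfun]; exact hR
    have hDgval : Dg s = (∑ a, rbar s a • X s a)
        + ∑ s', (Pγ θ s s' • Dg s' + v θ s' • (γ • ∑ a, P s a s' • X s a)) :=
      hL'.fderiv
    rw [hDgval]
    -- rearrange to W s + ∑ Pγ • Dg
    rw [Finset.sum_add_distrib]
    have h2 : ∑ s', v θ s' • (γ • ∑ a, P s a s' • X s a)
        = ∑ a, (γ * ∑ s', P s a s' * v θ s') • X s a := by
      simp_rw [Finset.smul_sum, smul_smul]
      rw [Finset.sum_comm]
      refine Finset.sum_congr rfl fun a _ => ?_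
      rw [← Finset.sum_smul]
      congr 1
      rw [Finset.mul_sum]
      exact Finset.sum_congr rfl fun s' _ => by ring
    have hq' : W s = (∑ a, rbar s a • X s a)
        + ∑ s', v θ s' • (γ • ∑ a, P s a s' • X s a) := by
      simp only [hWdef]
      rw [h2, ← Finset.sum_add_distrib]
      refine Finset.sum_congr rfl fun a _ => ?_
      rw [← add_smul, ← hq]
    rw [hq']
    abel
  -- solve the linear system: Dg = (1 - Pγ θ)⁻¹ applied to W
  have key2 : ∀ s, ∑ s', (1 - Pγ θ) s s' • Dg s' = W s := by
    intro s
    have : ∀ s', (1 - Pγ θ) s s' • Dg s'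
        = (1 : Matrix S S ℝ) s s' • Dg s' - Pγ θ s s' • Dg s' := fun s' => by
      rw [Matrix.sub_apply]; exact sub_smul ((1 : Matrix S S ℝ) s s') (Pγ θ s s') (Dg s')
    simp_rw [this]
    rw [Finset.sum_sub_distrib]
    have h1 : ∑ s', (1 : Matrix S S ℝ) s s' • Dg s' = Dg s := by
      simp [Matrix.one_apply, ite_smul]
    rw [h1, key s]
    abel
  have hsolve : ∀ s, Dg s = ∑ s', (1 - Pγ θ)⁻¹ s s' • W s' := by
    intro s
    have hinv : (1 - Pγ θ)⁻¹ * (1 - Pγ θ) = 1 :=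
      Matrix.nonsing_inv_mul _ (isUnit_iff_ne_zero.mpr (hdet θ))
    calc Dg s = ∑ s'', ((1 : Matrix S S ℝ) s s'') • Dg s'' := by
          simp [Matrix.one_apply, ite_smul]
      _ = ∑ s'', (((1 - Pγ θ)⁻¹ * (1 - Pγ θ)) s s'') • Dg s'' := by rw [hinv]
      _ = ∑ s'', ∑ s', ((1 - Pγ θ)⁻¹ s s' * (1 - Pγ θ) s' s'') • Dg s'' := by
          simp_rw [Matrix.mul_apply, Finset.sum_smul]
      _ = ∑ s', (1 - Pγ θ)⁻¹ s s' • ∑ s'', (1 - Pγ θ) s' s'' • Dg s'' := by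
          rw [Finset.sum_comm]
          refine Finset.sum_congr rfl fun s' _ => ?_
          rw [Finset.smul_sum]
          exact Finset.sum_congr rfl fun s'' _ => (smul_smul _ _ _).symm
      _ = ∑ s', (1 - Pγ θ)⁻¹ s s' • W s' := by simp_rw [key2]
  -- derivative of J
  have hJd : HasFDerivAt (fun x => J (Function.update θ i x)) (∑ s, dμ s • Dg s) (θ i) := by
    have heq : (fun x => J (Function.update θ i x))
        = fun x => ∑ s, dμ s * v (Function.update θ i x) s := funext fun x => hJ _
    rw [heq]
    exact HasFDerivAt.fun_sum fun s _ => (hDg s).const_mul (dμ s)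
  rw [hJd.fderiv]
  -- log-derivative
  have hlog : ∀ s (a : ∀ j, Ai j), fderiv ℝ (fun x => Real.log (πl i x s (a i))) (θ i)
      = (πl i (θ i) s (a i))⁻¹ • L s a :=
    fun s a => ((hL s a).log (ne_of_gt (hπpos i (θ i) s (a i)))).fderiv
  have hπθ : ∀ s a, π θ s a = c s a * πl i (θ i) s (a i) := by
    intro s a
    have := hπsplit (θ i) s a
    rwa [hupd] at this
  calc ∑ s, dμ s • Dg s
      = ∑ s, dμ s • ∑ s', (1 - Pγ θ)⁻¹ s s' • W s' := by simp_rw [hsolve]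
    _ = ∑ s', (∑ s, dμ s * (1 - Pγ θ)⁻¹ s s') • W s' := by
        simp_rw [Finset.smul_sum, smul_smul]
        rw [Finset.sum_comm]
        exact Finset.sum_congr rfl fun s' _ => (Finset.sum_smul).symm
    _ = ∑ s, em θ s • W s := by
        refine Finset.sum_congr rfl fun s' _ => ?_
        rw [hem]
    _ = ∑ s, ∑ a, (em θ s * (π θ s a * q θ s a)) •
          fderiv ℝ (fun x => Real.log (πl i x s (a i))) (θ i) := by
        refine Finset.sum_congr rfl fun s _ => ?_
        simp only [hWdef]
        rw [Finset.smul_sum]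
        refine Finset.sum_congr rfl fun a _ => ?_
        simp only [hXdef]
        rw [hlog s a, hπθ s a, smul_smul, smul_smul, smul_smul]
        congr 1
        have hne : πl i (θ i) s (a i) ≠ 0 := ne_of_gt (hπpos i (θ i) s (a i))
        field_simp
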